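/- arXiv:2207.03250 — 4 statements merged into one kernel-verified Lean document; each statement's English description precedes it below -/
import Mathlib

section
/- For every positive integer $i$, the finite convolution identity $\sum_{k=1}^{i-1} \frac{H_k}{i-k} = H_i^2 - H_i^{(2)}$ holds. -/
open Real

noncomputable def H (n k : ℕ) : ℝ := ∑ i ∈ Finset.Icc 1 k, 1 / (i : ℝ) ^ n

noncomputable def h (n k : ℕ) : ℝ := ∑ i ∈ Finset.Icc 1 k, 1 / (2 * (i : ℝ) - 1) ^ n

noncomputable def zeta (s : ℕ) : ℝ := ∑' n : ℕ, 1 / ((n : ℝ) + 1) ^ s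

open Finset

lemma H1_range (k : ℕ) : H 1 k = ∑ j ∈ range k, 1/((j:ℝ)+1) := by
  induction k with
  | zero => simp [H]
  | succ k ih =>
    unfold H at *
    rw [Finset.sum_Icc_succ_top (by omega), Finset.sum_range_succ, ih]
    push_cast; ring

lemma H1_succ (k : ℕ) : H 1 (k+1) = H 1 k + 1/((k:ℝ)+1) := by
  simp [H1_range, Finset.sum_range_succ]

lemma H2_succ (k : ℕ) : H 2 (k+1) = H 2 k + 1/((k:ℝ)+1)^2 := by
  unfold H
  rw [Finset.sum_Icc_succ_top (by omega)]
  push_cast; ring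

lemma refl_sum (n : ℕ) : ∑ k ∈ range n, 1/((n:ℝ)-k) = H 1 n := by
  rw [H1_range, ← Finset.sum_range_reflect]
  refine Finset.sum_congr rfl fun k hk => ?_
  have hk' := Finset.mem_range.mp hk
  have : ((n - 1 - k : ℕ) : ℝ) = (n:ℝ) - k - 1 := by
    push_cast [Nat.cast_sub (by omega : k ≤ n - 1), Nat.cast_sub (by omega : 1 ≤ n)]
    ring
  rw [this]; ring_nf

lemma tail_sum (n : ℕ) : ∑ k ∈ range n, 1/((k:ℝ)+2) = H 1 (n+1) - 1 := by
  rw [H1_range, Finset.sum_range_succ']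
  push_cast; ring_nf

lemma key (n : ℕ) : ∑ k ∈ range n, H 1 (k+1) / ((n:ℝ) - k) = H 1 (n+1)^2 - H 2 (n+1) := by
  induction n with
  | zero => norm_num [H]
  | succ n ih =>
    rw [Finset.sum_range_succ']
    push_cast
    have e1 : ∀ k ∈ range n, H 1 (k+1+1) / (((n:ℕ)+1:ℝ) - (k+1)) =
        H 1 (k+1) / ((n:ℝ) - k) + 1/(((k:ℝ)+2) * ((n:ℝ)-k)) := by
      intro k hk
      have hk' := Finset.mem_range.mp hk
      have hnk : (n:ℝ) - k ≠ 0 := by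
        have : (k:ℝ) < n := by exact_mod_cast hk'
        intro h; nlinarith
      rw [H1_succ (k+1)]
      push_cast
      rw [show ((n:ℝ)+1) - ((k:ℝ)+1) = (n:ℝ) - k by ring]
      have h2 : ((k:ℝ)+2) ≠ 0 := by positivity
      field_simp
      ring
    rw [Finset.sum_congr rfl e1, Finset.sum_add_distrib, ih]
    have e2 : ∑ k ∈ range n, 1/(((k:ℝ)+2) * ((n:ℝ)-k)) =
        (1/((n:ℝ)+2)) * ((H 1 (n+1) - 1) + H 1 n) := by
      have e3 : ∀ k ∈ range n, 1/(((k:ℝ)+2) * ((n:ℝ)-k)) =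
          (1/((n:ℝ)+2)) * (1/((k:ℝ)+2) + 1/((n:ℝ)-k)) := by
        intro k hk
        have hk' := Finset.mem_range.mp hk
        have hnk : (n:ℝ) - k ≠ 0 := by
          have : (k:ℝ) < n := by exact_mod_cast hk'
          intro h; nlinarith
        have h2 : ((k:ℝ)+2) ≠ 0 := by positivity
        have h3 : ((n:ℝ)+2) ≠ 0 := by positivity
        field_simp
        ring
      rw [Finset.sum_congr rfl e3, ← Finset.mul_sum, Finset.sum_add_distrib,
        tail_sum, refl_sum]
    rw [e2]
    have hH1 : H 1 (n+1) = H 1 n + 1/((n:ℝ)+1) := H1_succ n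
    have hH1' : H 1 (n+1+1) = H 1 (n+1) + 1/((n:ℝ)+1+1) := by
      rw [H1_succ (n+1)]; push_cast; ring
    have hH2' : H 2 (n+1+1) = H 2 (n+1) + 1/((n:ℝ)+1+1)^2 := by
      rw [H2_succ (n+1)]; push_cast; ring
    have h1 : ((n:ℝ)+1) ≠ 0 := by positivity
    have h2 : ((n:ℝ)+2) ≠ 0 := by positivity
    rw [hH1', hH2']
    have : H 1 1 / (((n:ℕ)+1:ℝ) - 0) = 1/((n:ℝ)+1) := by
      norm_num [H]
    rw [this, hH1]
    field_simp
    ring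

theorem stmt3 (i : ℕ) (hi : 0 < i) :
    ∑ k ∈ Finset.Icc 1 (i - 1), H 1 k / ((i : ℝ) - k) = H 1 i ^ 2 - H 2 i := by
  obtain ⟨n, rfl⟩ : ∃ n, i = n + 1 := ⟨i - 1, by omega⟩
  rw [show n + 1 - 1 = n from rfl, show Finset.Icc 1 n = Finset.Ico 1 (n+1) from rfl,
    Finset.sum_Ico_eq_sum_range]
  simp only [Nat.add_sub_cancel]
  have := key n
  rw [← this]
  refine Finset.sum_congr rfl fun k hk => ?_
  push_cast
  ring_nf
end

section
/- For every positive integer $i$, $\sum_{k=1}^{\infty} \frac{H_k}{k(i+k)} = \frac{\zeta(2)}{i} + \frac{H_i^2}{2i} + \frac{H_i^{(2)}}{2i} - \frac{H_i}{i^2}$. -/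
open Real

open Filter Topology

lemma H_succ' (n N : ℕ) : H n (N+1) = H n N + 1 / ((N:ℝ)+1)^n := by
  unfold H
  rw [Finset.sum_Icc_succ_top (Nat.le_add_left 1 N)]
  push_cast; ring

lemma H_zero' (n : ℕ) : H n 0 = 0 := by simp [H]
lemma H_nonneg' (n N : ℕ) : 0 ≤ H n N := by unfold H; positivity

/-- Partial sums of the Euler-type series. -/
noncomputable def T' (i N : ℕ) : ℝ := ∑ k ∈ Finset.Icc 1 N, H 1 k / ((k:ℝ) * ((k:ℝ) + i))

/-- The claimed value of the series. -/
noncomputable def L' (i : ℕ) : ℝ :=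
  (π ^ 2 / 6) / i + H 1 i ^ 2 / (2 * i) + H 2 i / (2 * i) - H 1 i / (i : ℝ) ^ 2

lemma T'_succ (i N : ℕ) :
    T' i (N+1) = T' i N + H 1 (N+1) / (((N:ℝ)+1) * (((N:ℝ)+1) + i)) := by
  unfold T'
  rw [Finset.sum_Icc_succ_top (Nat.le_add_left 1 N)]
  push_cast; ring

lemma base_formula' (N : ℕ) : T' 1 N = H 2 N - H 1 N / ((N:ℝ)+1) := by
  induction N with
  | zero => simp [T', H_zero']
  | succ N ih =>
    rw [T'_succ, ih, H_succ', H_succ']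
    have h1 : ((N:ℝ)+1) ≠ 0 := by positivity
    have h2 : ((N:ℝ)+1+1) ≠ 0 := by positivity
    push_cast
    field_simp
    ring

lemma inc_key' (m n x : ℝ) (hm : 0 < m) (hn : 0 ≤ n) :
    (m+1) * ((x + 1/(n+1)) / ((n+1)*((n+1)+(m+1)))) =
      m * ((x + 1/(n+1)) / ((n+1)*((n+1)+m)))
      + ((1/m)*(1/(n+1) - 1/(n+m+1)) - (x+1/(n+1))/(n+1+1+m) + x/(n+1+m)) := by
  have h1 : n+1 ≠ 0 := by positivity
  have h2 : n+1+m ≠ 0 := by positivity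
  have h3 : n+m+1 ≠ 0 := by positivity
  have h4 : n+1+1+m ≠ 0 := by positivity
  have h5 : m ≠ 0 := hm.ne'
  field_simp
  ring

lemma step_formula' (i : ℕ) (hi : 0 < i) (N : ℕ) :
    ((i:ℝ)+1) * T' (i+1) N = (i:ℝ) * T' i N +
      ((1/(i:ℝ)) * (H 1 i - (H 1 (N+i) - H 1 N)) - H 1 N / ((N:ℝ)+1+i)) := by
  have him : (0:ℝ) < i := by exact_mod_cast hi
  induction N with
  | zero => simp [T', H_zero']
  | succ N ih =>
    have hrw : N + 1 + i = (N + i) + 1 := by omega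
    rw [T'_succ, T'_succ, hrw, H_succ' (N := N + i), H_succ' (N := N)]
    have key := inc_key' (i:ℝ) (N:ℝ) (H 1 N) him (Nat.cast_nonneg N)
    push_cast at ih key ⊢
    linear_combination ih + key

lemma tendsto_inv_shift' (c : ℝ) :
    Tendsto (fun N : ℕ => 1 / ((N:ℝ) + c)) atTop (𝓝 0) := by
  simp only [one_div]
  exact (tendsto_atTop_add_const_right atTop c tendsto_natCast_atTop_atTop).inv_tendsto_atTop

lemma tendsto_tail' (i : ℕ) :
    Tendsto (fun N : ℕ => H 1 (N + i) - H 1 N) atTop (𝓝 0) := by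
  induction i with
  | zero => simpa using tendsto_const_nhds
  | succ i ih =>
    have h2 := tendsto_inv_shift' ((i:ℝ)+1)
    have h3 := ih.add h2
    rw [add_zero] at h3
    refine h3.congr (fun N => ?_)
    have he : N + (i+1) = (N + i) + 1 := by omega
    rw [he, H_succ']
    push_cast; ring

lemma H_le_log' (N : ℕ) : H 1 N ≤ 1 + Real.log N := by
  have hb := harmonic_le_one_add_log N
  have he : H 1 N = ((harmonic N : ℚ) : ℝ) := by
    rw [harmonic_eq_sum_Icc]
    push_cast [H]
    simp [one_div]
  rw [he]; exact_mod_cast hb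

lemma tendsto_H_div' (c : ℝ) (hc : 1 ≤ c) :
    Tendsto (fun N : ℕ => H 1 N / ((N:ℝ) + c)) atTop (𝓝 0) := by
  have hlog : Tendsto (fun N : ℕ => (1 + Real.log N) / ((N:ℝ) + c)) atTop (𝓝 0) := by
    have h1 := tendsto_inv_shift' c
    have h2 : Tendsto (fun x : ℝ => Real.log x ^ 1 / (1 * x + c)) atTop (𝓝 0) :=
      Real.tendsto_pow_log_div_mul_add_atTop 1 c 1 one_ne_zero
    have h3 := h2.comp tendsto_natCast_atTop_atTop
    have h4 := h1.add h3
    rw [add_zero] at h4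
    refine h4.congr (fun N => ?_)
    simp only [Function.comp, pow_one, one_mul]
    ring
  refine squeeze_zero (fun N => ?_) (fun N => ?_) hlog
  · have := H_nonneg' 1 N
    positivity
  · have hd : (0:ℝ) < (N:ℝ) + c := by positivity
    gcongr
    exact H_le_log' N

lemma H_eq_range' (n N : ℕ) (hn : 0 < n) :
    H n N = ∑ k ∈ Finset.range (N+1), 1/(k:ℝ)^n := by
  induction N with
  | zero => simp [H_zero', zero_pow hn.ne']
  | succ N ih => rw [Finset.sum_range_succ, ← ih, H_succ']; push_cast; ring

lemma tendsto_H2' : Tendsto (fun N : ℕ => H 2 N) atTop (𝓝 (π^2/6)) := by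
  have h1 := hasSum_zeta_two.tendsto_sum_nat
  have h2 := h1.comp (tendsto_add_atTop_nat 1)
  refine h2.congr (fun N => ?_)
  rw [H_eq_range' 2 N (by norm_num)]
  rfl

lemma claim' (i : ℕ) (hi : 0 < i) :
    Tendsto (fun N : ℕ => T' i N) atTop (𝓝 (L' i)) := by
  induction i, hi using Nat.le_induction with
  | base =>
    have hL : L' 1 = π^2/6 := by
      have h1 : H 1 1 = 1 := by simp [H]
      have h2 : H 2 1 = 1 := by simp [H]
      simp [L', h1, h2]
      ring
    rw [hL]
    have ht := tendsto_H2'.sub (tendsto_H_div' 1 le_rfl)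
    rw [sub_zero] at ht
    exact ht.congr (fun N => (base_formula' N).symm)
  | succ i hi ih =>
    have him : (0:ℝ) < i := by exact_mod_cast hi
    have hi1 : ((i:ℝ)+1) ≠ 0 := by positivity
    -- limit of the correction term
    have hA : Tendsto (fun N : ℕ =>
        (1/(i:ℝ)) * (H 1 i - (H 1 (N+i) - H 1 N)) - H 1 N / ((N:ℝ)+1+i))
        atTop (𝓝 ((1/(i:ℝ)) * H 1 i)) := by
      have h1 := (tendsto_const_nhds (x := H 1 i) (f := atTop (α := ℕ))).sub (tendsto_tail' i)
      have h2 := (h1.const_mul (1/(i:ℝ))).sub (tendsto_H_div' (1+(i:ℝ)) (by linarith))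
      rw [sub_zero, sub_zero] at h2
      refine h2.congr (fun N => ?_)
      ring_nf
    have hT : Tendsto (fun N : ℕ => T' (i+1) N) atTop
        (𝓝 (((i:ℝ) * L' i + (1/(i:ℝ)) * H 1 i) / ((i:ℝ)+1))) := by
      have h3 := ((ih.const_mul (i:ℝ)).add hA).div_const ((i:ℝ)+1)
      refine h3.congr (fun N => ?_)
      have hs := step_formula' i hi N
      rw [div_eq_iff hi1]
      linarith [hs]
    have hval : ((i:ℝ) * L' i + (1/(i:ℝ)) * H 1 i) / ((i:ℝ)+1) = L' (i+1) := by
      unfold L'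
      rw [H_succ' 1 i, H_succ' 2 i]
      have h5 : (i:ℝ) ≠ 0 := him.ne'
      push_cast
      field_simp
      ring
    rw [← hval]
    exact hT

theorem stmt4 (i : ℕ) (hi : 0 < i) :
    ∑' k : ℕ, H 1 (k + 1) / (((k : ℝ) + 1) * ((i : ℝ) + ((k : ℝ) + 1))) =
      (π ^ 2 / 6) / i + H 1 i ^ 2 / (2 * i) + H 2 i / (2 * i) - H 1 i / (i : ℝ) ^ 2 := by
  set f : ℕ → ℝ := fun k => H 1 (k + 1) / (((k : ℝ) + 1) * ((i : ℝ) + ((k : ℝ) + 1))) with hf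
  have hfr : ∀ N : ℕ, ∑ k ∈ Finset.range N, f k = T' i N := by
    intro N
    induction N with
    | zero => simp [T']
    | succ N ih =>
      rw [Finset.sum_range_succ, ih, T'_succ, hf]
      push_cast; ring_nf
  have hnonneg : ∀ k, 0 ≤ f k := by
    intro k
    have := H_nonneg' 1 (k+1)
    have h1 : (0:ℝ) ≤ (k:ℝ)+1 := by positivity
    have h2 : (0:ℝ) ≤ (i:ℝ)+((k:ℝ)+1) := by positivity
    rw [hf]
    positivity
  have htend : Tendsto (fun N : ℕ => ∑ k ∈ Finset.range N, f k) atTop (𝓝 (L' i)) := by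
    have := claim' i hi
    exact this.congr (fun N => (hfr N).symm)
  have hmono : Monotone (fun N : ℕ => ∑ k ∈ Finset.range N, f k) := by
    intro a b hab
    exact Finset.sum_le_sum_of_subset_of_nonneg (Finset.range_subset_range.mpr hab)
      (fun k _ _ => hnonneg k)
  have hsum : Summable f :=
    summable_of_sum_range_le hnonneg (fun N => hmono.ge_of_tendsto htend N)
  have := tendsto_nhds_unique hsum.hasSum.tendsto_sum_nat htend
  rw [this]
  rfl
end

section
/- $\sum_{k=1}^{\infty} \left( \frac{h_k^{(2)}}{(2k-1)^6} + \frac{h_k^{(6)}}{(2k-1)^2} \right) = \frac{285}{128}\zeta(8)$. -/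
open Real

noncomputable def oA (s j : ℕ) : ℝ := 1 / (2 * (j : ℝ) + 1) ^ s


theorem bernoulli'_five : bernoulli' 5 = 0 :=
  bernoulli'_eq_zero_of_odd ⟨2, by norm_num⟩ (by norm_num)

theorem bernoulli'_six : bernoulli' 6 = 1/42 := by
  have h62 : Nat.choose 6 2 = 15 := by decide
  have h63 : Nat.choose 6 3 = 20 := by decide
  have h64 : Nat.choose 6 4 = 15 := by decide
  rw [bernoulli'_def]
  norm_num [Finset.sum_range_succ, h62, h63, h64, bernoulli'_five]

theorem bernoulli'_seven : bernoulli' 7 = 0 :=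
  bernoulli'_eq_zero_of_odd ⟨3, by norm_num⟩ (by norm_num)

theorem bernoulli'_eight : bernoulli' 8 = -1/30 := by
  have h82 : Nat.choose 8 2 = 28 := by decide
  have h83 : Nat.choose 8 3 = 56 := by decide
  have h84 : Nat.choose 8 4 = 70 := by decide
  have h85 : Nat.choose 8 5 = 56 := by decide
  have h86 : Nat.choose 8 6 = 28 := by decide
  rw [bernoulli'_def]
  norm_num [Finset.sum_range_succ, h82, h83, h84, h85, h86,
    bernoulli'_five, bernoulli'_six, bernoulli'_seven]

theorem bern6 : bernoulli 6 = 1/42 := by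
  have h := bernoulli'_eq_bernoulli 6
  rw [bernoulli'_six] at h
  norm_num at h
  linarith

theorem bern8 : bernoulli 8 = -1/30 := by
  have h := bernoulli'_eq_bernoulli 8
  rw [bernoulli'_eight] at h
  norm_num at h
  linarith

theorem hz6 : HasSum (fun n : ℕ => 1 / (n : ℝ) ^ 6) (π ^ 6 / 945) := by
  have h := hasSum_zeta_nat (k := 3) (by norm_num)
  norm_num [bern6, Nat.factorial] at h
  convert h using 1
  · ext n; norm_num
  · ring

theorem hz8 : HasSum (fun n : ℕ => 1 / (n : ℝ) ^ 8) (π ^ 8 / 9450) := by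
  have h := hasSum_zeta_nat (k := 4) (by norm_num)
  norm_num [bern8, Nat.factorial] at h
  convert h using 1
  · ext n; norm_num
  · ring



theorem hasSum_oA {s : ℕ} (hs : 1 ≤ s) {Z : ℝ}
    (hz : HasSum (fun n : ℕ => 1 / (n : ℝ) ^ s) Z) :
    HasSum (oA s) ((1 - (2 : ℝ)⁻¹ ^ s) * Z) := by
  have he : HasSum (fun k : ℕ => 1 / ((2 * k : ℕ) : ℝ) ^ s) ((2 : ℝ)⁻¹ ^ s * Z) := by
    have h2 := hz.mul_left ((2 : ℝ)⁻¹ ^ s)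
    have hfun : (fun k : ℕ => 1 / ((2 * k : ℕ) : ℝ) ^ s)
        = fun k : ℕ => (2 : ℝ)⁻¹ ^ s * (1 / (k : ℝ) ^ s) := by
      funext k
      push_cast
      rw [mul_pow, one_div, mul_inv, inv_pow, one_div]
    rw [hfun]
    exact h2
  have hodds : Summable (fun k : ℕ => 1 / ((2 * k + 1 : ℕ) : ℝ) ^ s) := by
    have hinj : Function.Injective (fun k : ℕ => 2 * k + 1) := fun x y hxy => by simp only [] at hxy; omega
    exact hz.summable.comp_injective hinj
  obtain ⟨L, hL⟩ := hodds
  have htot := HasSum.even_add_odd (f := fun n : ℕ => 1 / (n : ℝ) ^ s) he hL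
  have hZ : (2 : ℝ)⁻¹ ^ s * Z + L = Z := htot.unique hz
  have hLval : L = (1 - (2 : ℝ)⁻¹ ^ s) * Z := by rw [sub_mul, one_mul]; linarith
  rw [← hLval]
  have hfun : oA s = fun k : ℕ => 1 / ((2 * k + 1 : ℕ) : ℝ) ^ s := by
    funext k
    simp only [oA]
    push_cast
    ring_nf
  rw [hfun]
  exact hL

theorem lam2 : HasSum (oA 2) (π ^ 2 / 8) := by
  have := hasSum_oA (by norm_num) hasSum_zeta_two
  convert this using 1
  ring

theorem lam6 : HasSum (oA 6) (π ^ 6 / 960) := by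
  have := hasSum_oA (by norm_num) hz6
  convert this using 1
  norm_num
  ring

theorem lam8 : HasSum (oA 8) (17 * π ^ 8 / 161280) := by
  have := hasSum_oA (by norm_num) hz8
  convert this using 1
  norm_num
  ring

theorem zeta8_aux : (∑' n : ℕ, 1 / ((n : ℝ) + 1) ^ 8) = π ^ 8 / 9450 := by
  have h' : HasSum (fun n : ℕ => 1 / (((n + 1 : ℕ)) : ℝ) ^ 8) (π ^ 8 / 9450) :=
    (hasSum_nat_add_iff (f := fun n : ℕ => 1 / (n : ℝ) ^ 8) 1).mpr (by simpa using hz8)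
  rw [← h'.tsum_eq]
  apply tsum_congr
  intro n
  push_cast
  ring_nf



theorem oA_nonneg (s j : ℕ) : 0 ≤ oA s j := by
  unfold oA; positivity

theorem oA_mul (j : ℕ) : oA 6 j * oA 2 j = oA 8 j := by
  unfold oA
  rw [div_mul_div_comm, one_mul, ← pow_add]

theorem summable_ite {c : ℕ × ℕ → Prop} [DecidablePred c] {f : ℕ × ℕ → ℝ}
    (hf : Summable f) (h0 : ∀ p, 0 ≤ f p) :
    Summable fun p => if c p then f p else 0 := by
  refine Summable.of_nonneg_of_le (fun p => ?_) (fun p => ?_) hf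
  · split_ifs with hc
    · exact h0 p
    · exact le_refl 0
  · split_ifs with hc
    · exact le_refl _
    · exact h0 p

theorem h_eq (n k : ℕ) : h n (k + 1) = ∑ j ∈ Finset.range (k + 1), oA n j := by
  induction k with
  | zero =>
    simp [h, oA]
    norm_num
  | succ k ih =>
    unfold h
    rw [Finset.sum_Icc_succ_top (by omega : 1 ≤ k + 1 + 1), Finset.sum_range_succ]
    unfold h at ih
    rw [ih]
    congr 1
    unfold oA
    push_cast
    ring_nf

theorem stmt12 :
    ∑' k : ℕ, (h 2 (k + 1) / (2 * ((k : ℝ) + 1) - 1) ^ 6 + h 6 (k + 1) / (2 * ((k : ℝ) + 1) - 1) ^ 2) =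
      285 / 128 * zeta 8 := by
  classical
  have hA := lam2
  have hB := lam6
  have hD : HasSum (fun k => oA 6 k * oA 2 k) (17 * π ^ 8 / 161280) := by
    have : (fun k => oA 6 k * oA 2 k) = oA 8 := funext oA_mul
    rw [this]; exact lam8
  set F : ℕ × ℕ → ℝ := fun p => if p.2 ≤ p.1 then oA 6 p.1 * oA 2 p.2 else 0 with hF
  set G : ℕ × ℕ → ℝ := fun p => if p.2 ≤ p.1 then oA 2 p.1 * oA 6 p.2 else 0 with hG
  set G' : ℕ × ℕ → ℝ := fun p => if p.1 ≤ p.2 then oA 6 p.1 * oA 2 p.2 else 0 with hG'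
  set dg : ℕ × ℕ → ℝ := fun p => if p.1 = p.2 then oA 6 p.1 * oA 2 p.2 else 0 with hdg
  have fullnn : ∀ p : ℕ × ℕ, 0 ≤ oA 6 p.1 * oA 2 p.2 :=
    fun p => mul_nonneg (oA_nonneg _ _) (oA_nonneg _ _)
  have full2nn : ∀ p : ℕ × ℕ, 0 ≤ oA 2 p.1 * oA 6 p.2 :=
    fun p => mul_nonneg (oA_nonneg _ _) (oA_nonneg _ _)
  have Sfull : Summable (fun p : ℕ × ℕ => oA 6 p.1 * oA 2 p.2) :=
    hB.summable.mul_of_nonneg hA.summable (fun j => oA_nonneg 6 j) (fun j => oA_nonneg 2 j)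
  have Sfull2 : Summable (fun p : ℕ × ℕ => oA 2 p.1 * oA 6 p.2) :=
    hA.summable.mul_of_nonneg hB.summable (fun j => oA_nonneg 2 j) (fun j => oA_nonneg 6 j)
  have SF : Summable F := summable_ite Sfull fullnn
  have SG : Summable G := summable_ite Sfull2 full2nn
  have SG' : Summable G' := summable_ite Sfull fullnn
  have Sdg : Summable dg := summable_ite Sfull fullnn
  -- inner sums
  have hinner1 : ∀ k : ℕ, (∑' j : ℕ, F (k, j)) = (∑ j ∈ Finset.range (k + 1), oA 2 j) * oA 6 k := by
    intro k
    rw [tsum_eq_sum (s := Finset.range (k + 1))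
      (fun j hj => if_neg (by simp only [Finset.mem_range] at hj; omega))]
    rw [Finset.sum_mul]
    refine Finset.sum_congr rfl fun j hj => ?_
    simp only [Finset.mem_range] at hj
    rw [if_pos (by omega : j ≤ k)]
    ring
  have hinner2 : ∀ k : ℕ, (∑' j : ℕ, G (k, j)) = (∑ j ∈ Finset.range (k + 1), oA 6 j) * oA 2 k := by
    intro k
    rw [tsum_eq_sum (s := Finset.range (k + 1))
      (fun j hj => if_neg (by simp only [Finset.mem_range] at hj; omega))]
    rw [Finset.sum_mul]
    refine Finset.sum_congr rfl fun j hj => ?_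
    simp only [Finset.mem_range] at hj
    rw [if_pos (by omega : j ≤ k)]
    ring
  have fibF : ∀ k : ℕ, Summable fun j => F (k, j) := fun k =>
    summable_of_ne_finset_zero (s := Finset.range (k + 1))
      (fun j hj => if_neg (by simp only [Finset.mem_range] at hj; omega))
  have fibG : ∀ k : ℕ, Summable fun j => G (k, j) := fun k =>
    summable_of_ne_finset_zero (s := Finset.range (k + 1))
      (fun j hj => if_neg (by simp only [Finset.mem_range] at hj; omega))
  have EF : (∑' p : ℕ × ℕ, F p) = ∑' k : ℕ, (∑ j ∈ Finset.range (k + 1), oA 2 j) * oA 6 k := by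
    rw [Summable.tsum_prod' SF fibF]
    exact tsum_congr hinner1
  have EG : (∑' p : ℕ × ℕ, G p) = ∑' k : ℕ, (∑ j ∈ Finset.range (k + 1), oA 6 j) * oA 2 k := by
    rw [Summable.tsum_prod' SG fibG]
    exact tsum_congr hinner2
  have EG'G : (∑' p : ℕ × ℕ, G' p) = ∑' p : ℕ × ℕ, G p := by
    rw [← (Equiv.prodComm ℕ ℕ).tsum_eq G]
    refine tsum_congr fun p => ?_
    simp only [hG, hG', Equiv.coe_prodComm, Prod.swap, Prod.fst_swap, Prod.snd_swap]
    split_ifs with hc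
    · ring
    · rfl
  -- pointwise splitting
  have hpoint : ∀ p : ℕ × ℕ, F p + G' p = oA 6 p.1 * oA 2 p.2 + dg p := by
    intro p
    rcases Nat.lt_trichotomy p.1 p.2 with hlt | heq | hgt
    · rw [hF, hG', hdg]
      simp only
      rw [if_neg (by omega), if_pos (by omega), if_neg (by omega)]
      ring
    · rw [hF, hG', hdg]
      simp only
      rw [if_pos (by omega), if_pos (by omega), if_pos heq]
    · rw [hF, hG', hdg]
      simp only
      rw [if_pos (by omega), if_neg (by omega), if_neg (by omega)]
  -- diagonal sum
  have Ediag : HasSum dg (17 * π ^ 8 / 161280) := by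
    have hinj : Function.Injective (fun k : ℕ => ((k, k) : ℕ × ℕ)) := by
      intro x y hxy
      simpa using congrArg Prod.fst hxy
    have hvan : ∀ p : ℕ × ℕ, p ∉ Set.range (fun k : ℕ => ((k, k) : ℕ × ℕ)) → dg p = 0 := by
      intro p hp
      rw [hdg]
      simp only
      rw [if_neg]
      intro hcon
      exact hp ⟨p.1, by rw [Prod.ext_iff]; exact ⟨rfl, hcon⟩⟩
    refine (hinj.hasSum_iff hvan).mp ?_
    have : (dg ∘ fun k : ℕ => ((k, k) : ℕ × ℕ)) = fun k => oA 6 k * oA 2 k := by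
      funext k
      simp only [Function.comp, hdg, if_pos rfl]
    rw [this]
    exact hD
  -- summability of outer sequences
  have SI1 : Summable fun k : ℕ => (∑ j ∈ Finset.range (k + 1), oA 2 j) * oA 6 k := by
    refine Summable.of_nonneg_of_le (fun k => ?_) (fun k => ?_) (hB.summable.mul_left (π ^ 2 / 8))
    · exact mul_nonneg (Finset.sum_nonneg fun j _ => oA_nonneg 2 j) (oA_nonneg 6 k)
    · exact mul_le_mul_of_nonneg_right
        (sum_le_hasSum (Finset.range (k + 1)) (fun j _ => oA_nonneg 2 j) hA) (oA_nonneg 6 k)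
  have SI2 : Summable fun k : ℕ => (∑ j ∈ Finset.range (k + 1), oA 6 j) * oA 2 k := by
    refine Summable.of_nonneg_of_le (fun k => ?_) (fun k => ?_) (hA.summable.mul_left (π ^ 6 / 960))
    · exact mul_nonneg (Finset.sum_nonneg fun j _ => oA_nonneg 6 j) (oA_nonneg 2 k)
    · exact mul_le_mul_of_nonneg_right
        (sum_le_hasSum (Finset.range (k + 1)) (fun j _ => oA_nonneg 6 j) hB) (oA_nonneg 2 k)
  -- term rewrite
  have hterm : ∀ k : ℕ,
      h 2 (k + 1) / (2 * ((k : ℝ) + 1) - 1) ^ 6 + h 6 (k + 1) / (2 * ((k : ℝ) + 1) - 1) ^ 2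
        = (∑ j ∈ Finset.range (k + 1), oA 2 j) * oA 6 k
          + (∑ j ∈ Finset.range (k + 1), oA 6 j) * oA 2 k := by
    intro k
    have e1 : (2 * ((k : ℝ) + 1) - 1) = 2 * (k : ℝ) + 1 := by ring
    rw [h_eq, h_eq, e1]
    unfold oA
    ring
  calc ∑' k : ℕ, (h 2 (k + 1) / (2 * ((k : ℝ) + 1) - 1) ^ 6 + h 6 (k + 1) / (2 * ((k : ℝ) + 1) - 1) ^ 2)
      = ∑' k : ℕ, ((∑ j ∈ Finset.range (k + 1), oA 2 j) * oA 6 k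
          + (∑ j ∈ Finset.range (k + 1), oA 6 j) * oA 2 k) := tsum_congr hterm
    _ = (∑' k : ℕ, (∑ j ∈ Finset.range (k + 1), oA 2 j) * oA 6 k)
          + ∑' k : ℕ, (∑ j ∈ Finset.range (k + 1), oA 6 j) * oA 2 k := Summable.tsum_add SI1 SI2
    _ = (∑' p : ℕ × ℕ, F p) + ∑' p : ℕ × ℕ, G p := by rw [EF, EG]
    _ = (∑' p : ℕ × ℕ, F p) + ∑' p : ℕ × ℕ, G' p := by rw [EG'G]
    _ = ∑' p : ℕ × ℕ, (F p + G' p) := (Summable.tsum_add SF SG').symm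
    _ = ∑' p : ℕ × ℕ, (oA 6 p.1 * oA 2 p.2 + dg p) := tsum_congr hpoint
    _ = (∑' p : ℕ × ℕ, oA 6 p.1 * oA 2 p.2) + ∑' p : ℕ × ℕ, dg p :=
        Summable.tsum_add Sfull Sdg
    _ = (π ^ 6 / 960) * (π ^ 2 / 8) + 17 * π ^ 8 / 161280 := by
        rw [← Summable.tsum_mul_tsum hB.summable hA.summable Sfull, hA.tsum_eq, hB.tsum_eq,
          Ediag.tsum_eq]
    _ = 285 / 128 * zeta 8 := by
        unfold zeta
        rw [zeta8_aux]
        ring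
end

section
/- $\sum_{k=1}^{\infty} \frac{h_k^{(2)}}{k^2} = \frac{45}{16}\zeta(4) - \sum_{k=1}^{\infty} \frac{h_k}{k^3}$. -/
open Real

open Finset

section Aux

/-- The generic summand for `∑ h 1 (k+1)/(k+1)^3`, indexed over `ℕ × ℕ`. -/
noncomputable def F1' (x : ℕ × ℕ) : ℝ := 1 / ((2 * (x.1 : ℝ) + 1) * ((x.1 : ℝ) + (x.2 : ℝ) + 1) ^ 3)

/-- The generic summand for `∑ h 2 (k+1)/(k+1)^2`, indexed over `ℕ × ℕ`. -/
noncomputable def F2' (x : ℕ × ℕ) : ℝ := 1 / ((2 * (x.1 : ℝ) + 1) ^ 2 * ((x.1 : ℝ) + (x.2 : ℝ) + 1) ^ 2)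

lemma summ_inv_sq : Summable (fun n : ℕ => 1 / ((n : ℝ) + 1) ^ 2) := by
  have h2 : Summable (fun n : ℕ => 1 / (n : ℝ) ^ 2) := hasSum_zeta_two.summable
  have := (summable_nat_add_iff (f := fun n : ℕ => 1 / (n : ℝ) ^ 2) 1).2 h2
  simpa using this

lemma base_summable :
    Summable (fun x : ℕ × ℕ => (1 / ((x.1 : ℝ) + 1) ^ 2) * (1 / ((x.2 : ℝ) + 1) ^ 2)) := by
  have := Summable.mul_of_nonneg (f := fun n : ℕ => 1 / ((n : ℝ) + 1) ^ 2)
    (g := fun n : ℕ => 1 / ((n : ℝ) + 1) ^ 2) summ_inv_sq summ_inv_sq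
    (fun _ => by positivity) (fun _ => by positivity)
  exact this

lemma F1'_summable : Summable F1' := by
  refine Summable.of_nonneg_of_le (fun x => by unfold F1'; positivity) ?_ base_summable
  rintro ⟨p, q⟩
  unfold F1'
  rw [div_mul_div_comm, one_mul]
  apply one_div_le_one_div_of_le (by positivity)
  have hp : (0:ℝ) ≤ (p:ℝ) := Nat.cast_nonneg p
  have hq : (0:ℝ) ≤ (q:ℝ) := Nat.cast_nonneg q
  nlinarith [sq_nonneg ((p:ℝ)+1), sq_nonneg ((q:ℝ)+1), mul_nonneg hp hq,
    mul_nonneg (mul_nonneg hp hq) hq, mul_nonneg (mul_nonneg hp hp) hq,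
    mul_nonneg (mul_nonneg (mul_nonneg hp hq) hq) hq,
    mul_nonneg (mul_nonneg (mul_nonneg hp hp) hq) hq]

lemma F2'_summable : Summable F2' := by
  refine Summable.of_nonneg_of_le (fun x => by unfold F2'; positivity) ?_ base_summable
  rintro ⟨p, q⟩
  unfold F2'
  rw [div_mul_div_comm, one_mul]
  apply one_div_le_one_div_of_le (by positivity)
  have hp : (0:ℝ) ≤ (p:ℝ) := Nat.cast_nonneg p
  have hq : (0:ℝ) ≤ (q:ℝ) := Nat.cast_nonneg q
  nlinarith [mul_nonneg hp hq, mul_nonneg (mul_nonneg hp hq) hq, mul_nonneg (mul_nonneg hp hp) hq]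

/-- Unfolding a `tsum` over `ℕ × ℕ` along antidiagonals. -/
lemma tsum_antidiag (F : ℕ × ℕ → ℝ) (hF : Summable F) :
    ∑' x : ℕ × ℕ, F x = ∑' k : ℕ, ∑ p ∈ range (k + 1), F (p, k - p) := by
  rw [← Finset.HasAntidiagonal.sigmaAntidiagonalEquivProd.tsum_eq F]
  have hs : Summable (F ∘ Finset.HasAntidiagonal.sigmaAntidiagonalEquivProd) :=
    (Equiv.summable_iff _).2 hF
  rw [show (fun c => F (Finset.HasAntidiagonal.sigmaAntidiagonalEquivProd c)) =
      F ∘ Finset.HasAntidiagonal.sigmaAntidiagonalEquivProd from rfl]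
  rw [Summable.tsum_sigma hs]
  congr 1
  funext n
  have : ∑' (c : { x // x ∈ Finset.HasAntidiagonal.antidiagonal n }),
      (F ∘ Finset.HasAntidiagonal.sigmaAntidiagonalEquivProd) ⟨n, c⟩ = ∑ x ∈ Finset.HasAntidiagonal.antidiagonal n, F x :=
    Finset.tsum_subtype (Finset.HasAntidiagonal.antidiagonal n) F
  rw [this, Finset.Nat.sum_antidiagonal_eq_sum_range_succ_mk]

lemma icc_reindex (k : ℕ) (g : ℕ → ℝ) :
    ∑ i ∈ Finset.Icc 1 (k + 1), g i = ∑ p ∈ range (k + 1), g (p + 1) := by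
  induction k with
  | zero => simp
  | succ n ih =>
      rw [Finset.sum_Icc_succ_top (by omega), ih]; simp [Finset.sum_range_succ]

lemma perk2 (k : ℕ) :
    h 2 (k + 1) / ((k : ℝ) + 1) ^ 2 = ∑ p ∈ range (k + 1), F2' (p, k - p) := by
  unfold h
  rw [Finset.sum_div, icc_reindex k (fun i => 1 / (2 * (i : ℝ) - 1) ^ 2 / ((k : ℝ) + 1) ^ 2)]
  refine Finset.sum_congr rfl (fun p hp => ?_)
  have hpk : (p : ℕ) ≤ k := by simpa using Nat.lt_succ_iff.mp (Finset.mem_range.mp hp)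
  have hcast : ((k - p : ℕ) : ℝ) = (k : ℝ) - (p : ℝ) := Nat.cast_sub hpk
  unfold F2'
  rw [hcast]
  have h1 : (2 * ((p : ℝ) + 1) - 1) = 2 * (p : ℝ) + 1 := by ring
  push_cast
  rw [h1]
  rw [div_div, ← mul_pow, ← mul_pow]
  congr 2
  ring

lemma perk1 (k : ℕ) :
    h 1 (k + 1) / ((k : ℝ) + 1) ^ 3 = ∑ p ∈ range (k + 1), F1' (p, k - p) := by
  unfold h
  rw [Finset.sum_div, icc_reindex k (fun i => 1 / (2 * (i : ℝ) - 1) ^ 1 / ((k : ℝ) + 1) ^ 3)]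
  refine Finset.sum_congr rfl (fun p hp => ?_)
  have hpk : (p : ℕ) ≤ k := by simpa using Nat.lt_succ_iff.mp (Finset.mem_range.mp hp)
  have hcast : ((k - p : ℕ) : ℝ) = (k : ℝ) - (p : ℝ) := Nat.cast_sub hpk
  unfold F1'
  rw [hcast]
  push_cast
  rw [div_div, pow_one]
  congr 1
  ring

lemma pointwise (p q : ℕ) :
    F1' (p, q) + F2' (p, q) + F1' (q, p) + F2' (q, p) =
      (2 / (2 * (p : ℝ) + 1) ^ 2) * (2 / (2 * (q : ℝ) + 1) ^ 2) := by
  have hp : (0:ℝ) < 2 * (p:ℝ) + 1 := by positivity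
  have hq : (0:ℝ) < 2 * (q:ℝ) + 1 := by positivity
  have hs : (0:ℝ) < (p:ℝ) + (q:ℝ) + 1 := by positivity
  have hs' : (0:ℝ) < (q:ℝ) + (p:ℝ) + 1 := by positivity
  unfold F1' F2'
  field_simp
  ring

lemma odd_sq_summable : Summable (fun p : ℕ => 1 / (2 * (p : ℝ) + 1) ^ 2) := by
  refine Summable.of_nonneg_of_le (fun p => by positivity) (fun p => ?_) summ_inv_sq
  apply one_div_le_one_div_of_le (by positivity)
  have : (0:ℝ) ≤ (p:ℝ) := Nat.cast_nonneg p
  nlinarith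

lemma lambda_two : ∑' p : ℕ, 1 / (2 * (p : ℝ) + 1) ^ 2 = π ^ 2 / 8 := by
  set f : ℕ → ℝ := fun n => 1 / (n : ℝ) ^ 2 with hf
  have heven : (fun k : ℕ => f (2 * k)) = fun k : ℕ => (1 / 4) * (1 / (k : ℝ) ^ 2) := by
    funext k
    simp only [hf]
    push_cast
    rw [mul_pow, div_mul_div_comm]
    norm_num
  have hodd : (fun k : ℕ => f (2 * k + 1)) = fun k : ℕ => 1 / (2 * (k : ℝ) + 1) ^ 2 := by
    funext k
    simp only [hf]
    push_cast
    ring_nf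
  have se : Summable (fun k : ℕ => f (2 * k)) := by
    rw [heven]; exact hasSum_zeta_two.summable.mul_left _
  have so : Summable (fun k : ℕ => f (2 * k + 1)) := by rw [hodd]; exact odd_sq_summable
  have hh := tsum_even_add_odd se so
  rw [heven, hodd, hasSum_zeta_two.tsum_eq, tsum_mul_left, hasSum_zeta_two.tsum_eq] at hh
  linarith

lemma zeta_four_val : ∑' n : ℕ, 1 / ((n : ℝ) + 1) ^ 4 = π ^ 4 / 90 := by
  have hh := Summable.tsum_eq_zero_add hasSum_zeta_four.summable
  rw [hasSum_zeta_four.tsum_eq] at hh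
  norm_num at hh
  simp only [one_div]
  exact hh.symm

lemma u_summable : Summable (fun p : ℕ => 2 / (2 * (p : ℝ) + 1) ^ 2) := by
  have := odd_sq_summable.mul_left 2
  simpa only [mul_one_div] using this

lemma u_tsum : ∑' p : ℕ, 2 / (2 * (p : ℝ) + 1) ^ 2 = π ^ 2 / 4 := by
  have : (fun p : ℕ => 2 / (2 * (p : ℝ) + 1) ^ 2)
      = fun p : ℕ => 2 * (1 / (2 * (p : ℝ) + 1) ^ 2) := by
    funext p; rw [mul_one_div]
  rw [this, tsum_mul_left, lambda_two]
  ring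

lemma G_summable :
    Summable (fun x : ℕ × ℕ => (2 / (2 * (x.1 : ℝ) + 1) ^ 2) * (2 / (2 * (x.2 : ℝ) + 1) ^ 2)) := by
  have := Summable.mul_of_nonneg (f := fun p : ℕ => 2 / (2 * (p : ℝ) + 1) ^ 2)
    (g := fun p : ℕ => 2 / (2 * (p : ℝ) + 1) ^ 2) u_summable u_summable
    (fun _ => by positivity) (fun _ => by positivity)
  exact this

lemma G_tsum :
    ∑' x : ℕ × ℕ, (2 / (2 * (x.1 : ℝ) + 1) ^ 2) * (2 / (2 * (x.2 : ℝ) + 1) ^ 2)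
      = π ^ 4 / 16 := by
  rw [Summable.tsum_prod' G_summable (fun b => u_summable.mul_left (2 / (2 * (b : ℝ) + 1) ^ 2))]
  have : ∀ b : ℕ, ∑' c : ℕ, (2 / (2 * (b : ℝ) + 1) ^ 2) * (2 / (2 * (c : ℝ) + 1) ^ 2)
      = (2 / (2 * (b : ℝ) + 1) ^ 2) * (π ^ 2 / 4) := by
    intro b; rw [tsum_mul_left, u_tsum]
  rw [tsum_congr this, tsum_mul_right, u_tsum]
  ring

end Aux

theorem stmt18 :
    ∑' k : ℕ, h 2 (k + 1) / ((k : ℝ) + 1) ^ 2 =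
      45 / 16 * zeta 4 - ∑' k : ℕ, h 1 (k + 1) / ((k : ℝ) + 1) ^ 3 := by
  rw [eq_sub_iff_add_eq]
  have hA : (∑' k : ℕ, h 2 (k + 1) / ((k : ℝ) + 1) ^ 2) = ∑' x : ℕ × ℕ, F2' x := by
    rw [tsum_antidiag F2' F2'_summable]; exact tsum_congr perk2
  have hB : (∑' k : ℕ, h 1 (k + 1) / ((k : ℝ) + 1) ^ 3) = ∑' x : ℕ × ℕ, F1' x := by
    rw [tsum_antidiag F1' F1'_summable]; exact tsum_congr perk1
  rw [hA, hB]
  have hs1 : Summable (fun x : ℕ × ℕ => F1' x.swap) := F1'_summable.prod_symm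
  have hs2 : Summable (fun x : ℕ × ℕ => F2' x.swap) := F2'_summable.prod_symm
  have hswap1 : ∑' x : ℕ × ℕ, F1' x.swap = ∑' x : ℕ × ℕ, F1' x :=
    (Equiv.prodComm ℕ ℕ).tsum_eq F1'
  have hswap2 : ∑' x : ℕ × ℕ, F2' x.swap = ∑' x : ℕ × ℕ, F2' x :=
    (Equiv.prodComm ℕ ℕ).tsum_eq F2'
  have e1 : ∑' x : ℕ × ℕ, (F1' x + F2' x + F1' x.swap + F2' x.swap)
      = (∑' x : ℕ × ℕ, F1' x) + (∑' x : ℕ × ℕ, F2' x)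
        + (∑' x : ℕ × ℕ, F1' x.swap) + (∑' x : ℕ × ℕ, F2' x.swap) := by
    rw [Summable.tsum_add ((F1'_summable.add F2'_summable).add hs1) hs2,
      Summable.tsum_add (F1'_summable.add F2'_summable) hs1, Summable.tsum_add F1'_summable F2'_summable]
  have e2 : ∑' x : ℕ × ℕ, (F1' x + F2' x + F1' x.swap + F2' x.swap)
      = ∑' x : ℕ × ℕ, (2 / (2 * (x.1 : ℝ) + 1) ^ 2) * (2 / (2 * (x.2 : ℝ) + 1) ^ 2) := by
    refine tsum_congr (fun x => ?_)
    obtain ⟨p, q⟩ := x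
    exact pointwise p q
  have key : (∑' x : ℕ × ℕ, F1' x) + (∑' x : ℕ × ℕ, F2' x) = π ^ 4 / 32 := by
    have := e1.symm.trans (e2.trans G_tsum)
    rw [hswap1, hswap2] at this
    linarith
  have hz : zeta 4 = π ^ 4 / 90 := zeta_four_val
  rw [hz]
  linarith
end
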